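/- In the block Hankel factorization H_0 = V_{[K]} G_{[K]}, H_1 = V_{[K]} Λ G_{[K]} (with Λ ∈ ℂ^{r×r} diagonal), if V_{[K]} has full column rank r and G_{[K]} has full row rank r, and H_0 = V_0 Σ_0 W_0^H is a compact SVD with Σ_0 ∈ ℂ^{r×r} invertible, then V_0^H H_1 W_0 Σ_0^{-1} is similar to Λ; hence its eigenvalues are exactly the diagonal entries of Λ. -/
import Mathlib


open Matrix

/-- Higher-moment Beyn linearization: if `H₀ = V_[K] G_[K]`, `H₁ = V_[K] Λ G_[K]` with `V_[K]`
of full column rank `r`, `G_[K]` of full row rank `r`, `Λ` diagonal, and `H₀ = V₀ S₀ W₀ᴴ` a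
compact SVD with `S₀` invertible, then `V₀ᴴ H₁ W₀ S₀⁻¹` is similar to `Λ`. -/
theorem stmt9 {N M r : ℕ}
    (VK : Matrix (Fin N) (Fin r) ℂ) (GK : Matrix (Fin r) (Fin M) ℂ) (lam : Fin r → ℂ)
    (hVrank : VK.rank = r) (hGrank : GK.rank = r)
    (H0 H1 : Matrix (Fin N) (Fin M) ℂ)
    (hH0 : H0 = VK * GK) (hH1 : H1 = VK * Matrix.diagonal lam * GK)
    (V0 : Matrix (Fin N) (Fin r) ℂ) (W0 : Matrix (Fin M) (Fin r) ℂ)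
    (S0 : Matrix (Fin r) (Fin r) ℂ) (sig : Fin r → ℂ)
    (hS0 : S0 = Matrix.diagonal sig) (hS0unit : IsUnit S0.det)
    (hV0 : V0ᴴ * V0 = 1) (hW0 : W0ᴴ * W0 = 1)
    (hSVD : H0 = V0 * S0 * W0ᴴ) :
    ∃ S : Matrix (Fin r) (Fin r) ℂ, IsUnit S.det ∧
      V0ᴴ * H1 * W0 * S0⁻¹ = S * Matrix.diagonal lam * S⁻¹ := by
  set A := V0ᴴ * VK with hA
  set B := GK * W0 with hB
  have hAB : A * B = S0 := by
    have h1 : V0ᴴ * H0 * W0 = S0 := by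
      rw [hSVD]
      calc V0ᴴ * (V0 * S0 * W0ᴴ) * W0
          = (V0ᴴ * V0) * S0 * (W0ᴴ * W0) := by
            simp only [Matrix.mul_assoc]
        _ = S0 := by rw [hV0, hW0, one_mul, Matrix.mul_one]
    calc A * B = V0ᴴ * (VK * GK) * W0 := by
          rw [hA, hB]; simp only [Matrix.mul_assoc]
      _ = V0ᴴ * H0 * W0 := by rw [hH0]
      _ = S0 := h1
  have hdet : A.det * B.det = S0.det := by rw [← Matrix.det_mul, hAB]
  have hAunit : IsUnit A.det := isUnit_of_mul_isUnit_left (hdet ▸ hS0unit)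
  have hBunit : IsUnit B.det := isUnit_of_mul_isUnit_right (hdet ▸ hS0unit)
  refine ⟨A, hAunit, ?_⟩
  have hmain : V0ᴴ * H1 * W0 = A * Matrix.diagonal lam * B := by
    rw [hH1, hA, hB]; simp only [Matrix.mul_assoc]
  rw [hmain, ← hAB, Matrix.mul_inv_rev]
  calc A * Matrix.diagonal lam * B * (B⁻¹ * A⁻¹)
      = A * Matrix.diagonal lam * (B * B⁻¹) * A⁻¹ := by simp only [Matrix.mul_assoc]
    _ = A * Matrix.diagonal lam * A⁻¹ := by
        rw [Matrix.mul_nonsing_inv B hBunit, mul_one]
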